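/- If M ⊆ ℓ²(ℕ, ℂ) is a closed linear subspace with M ≠ {0} and M ≠ ℓ² which is invariant under the Cesàro operator C (i.e., C(M) ⊆ M), then the spectrum of the restriction C|_M equals the spectrum of C: σ(C|_M) = {z ∈ ℂ : |z − 1| ≤ 1}. -/

import Mathlib

set_option maxHeartbeats 1000000

/-- `C` is the Cesàro operator on `ℓ²(ℕ, ℂ)`: `(C a)ₙ = (1/(n+1)) ∑_{k=0}^{n} a_k`. -/
def IsCesaro (C : lp (fun _ : ℕ => ℂ) 2 →L[ℂ] lp (fun _ : ℕ => ℂ) 2) : Prop :=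
  ∀ (a : lp (fun _ : ℕ => ℂ) 2) (n : ℕ),
    C a n = (∑ k ∈ Finset.range (n + 1), a k) / (n + 1)

/-- Restriction of an operator to an invariant subspace. -/
noncomputable def restrictOp {X : Type*} [NormedAddCommGroup X] [NormedSpace ℂ X]
    (T : X →L[ℂ] X) (M : Submodule ℂ X) (h : ∀ y ∈ M, T y ∈ M) : M →L[ℂ] M where
  toLinearMap := T.toLinearMap.restrict h
  cont := Continuous.subtype_mk (T.continuous.comp continuous_subtype_val) _

noncomputable def Complex.abs : AbsoluteValue ℂ ℝ := NormedField.toAbsoluteValue ℂ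

lemma Complex.norm_eq_abs (z : ℂ) : ‖z‖ = Complex.abs z := rfl

lemma Complex.sq_abs (z : ℂ) : Complex.abs z ^ 2 = Complex.normSq z := Complex.sq_norm z

lemma Complex.abs_ofReal (x : ℝ) : Complex.abs (x : ℂ) = |x| := Complex.norm_real x

lemma Complex.abs_natCast (n : ℕ) : Complex.abs (n : ℂ) = n := Complex.norm_natCast n

lemma Complex.continuous_abs : Continuous Complex.abs := continuous_norm

noncomputable section
open Complex Finset Filter Metric
open scoped ENNReal NNReal Topology Pointwise InnerProductSpace

abbrev ELL := lp (fun _ : ℕ => ℂ) 2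


def gseq (z : ℂ) (n : ℕ) : ℂ := ∏ j ∈ Finset.range n, (1 - (z * ((j:ℂ)+1))⁻¹)

lemma gseq_succ (z : ℂ) (n : ℕ) : gseq z (n+1) = gseq z n * (1 - (z * ((n:ℂ)+1))⁻¹) :=
  Finset.prod_range_succ _ _

lemma gseq_rec (z : ℂ) (hz : z ≠ 0) (n : ℕ) :
    gseq z n / ((n:ℂ)+1) = z * gseq z n - z * gseq z (n+1) := by
  have hn : ((n:ℂ)+1) ≠ 0 := by
    exact Nat.cast_add_one_ne_zero n
  rw [gseq_succ]
  field_simp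
  ring

lemma summable_rpow_aux {t : ℝ} (ht : 1 < t) : Summable (fun n : ℕ => ((n:ℝ)+1) ^ (-t)) := by
  have h : Summable (fun n : ℕ => 1 / (n:ℝ) ^ t) := Real.summable_one_div_nat_rpow.mpr ht
  have h2 := h.comp_injective (add_left_injective 1)
  refine h2.congr fun n => ?_
  simp only [Function.comp_apply]
  push_cast
  rw [Real.rpow_neg (by positivity), one_div]


-- crude bound: |gseq z n| ≤ (1+W)^n
lemma gseq_crude {W : ℝ} (z : ℂ) (hW2 : Complex.abs z⁻¹ ≤ W) (n : ℕ) :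
    Complex.abs (gseq z n) ≤ (1+W) ^ n := by
  have h0 : (0:ℝ) ≤ W := le_trans (AbsoluteValue.nonneg _ _) hW2
  induction n with
  | zero => simp [gseq]
  | succ n ih =>
    rw [gseq_succ, map_mul, pow_succ]
    have hn1 : (0:ℝ) < (n:ℝ) + 1 := by positivity
    have hfac : Complex.abs (1 - (z * ((n:ℂ)+1))⁻¹) ≤ 1 + W := by
      calc Complex.abs (1 - (z * ((n:ℂ)+1))⁻¹)
          ≤ Complex.abs 1 + Complex.abs ((z * ((n:ℂ)+1))⁻¹) := by
            simpa [sub_eq_add_neg] using (AbsoluteValue.add_le Complex.abs 1 (-(z * ((n:ℂ)+1))⁻¹))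
        _ ≤ 1 + W := by
            rw [map_one]
            gcongr
            rw [mul_inv, map_mul]
            calc Complex.abs z⁻¹ * Complex.abs (((n:ℂ)+1)⁻¹) ≤ W * 1 := by
                  apply mul_le_mul hW2 ?_ (AbsoluteValue.nonneg _ _) h0
                  rw [map_inv₀]
                  rw [inv_le_one_iff₀]
                  right
                  have : Complex.abs ((n:ℂ)+1) = (n:ℝ)+1 := by
                    rw [show ((n:ℂ)+1) = ((n+1:ℕ):ℂ) by push_cast; ring, Complex.abs_natCast]
                    push_cast; ring
                  rw [this]; linarith
              _ = W := mul_one W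
    exact mul_le_mul ih hfac (AbsoluteValue.nonneg _ _) (by positivity)

lemma abs_nat_add_one (n : ℕ) : Complex.abs ((n:ℂ)+1) = (n:ℝ)+1 := by
  rw [show ((n:ℂ)+1) = ((n+1:ℕ):ℂ) by push_cast; ring, Complex.abs_natCast]
  push_cast; ring

-- key decay bound
lemma gseq_bound {r W : ℝ} (hr : 1/2 < r) (hW : 0 ≤ W) :
    ∃ C > 0, ∀ z : ℂ, r ≤ (z⁻¹).re → Complex.abs z⁻¹ ≤ W →
      ∀ n : ℕ, Complex.abs (gseq z n) ≤ C * ((n:ℝ)+1) ^ (-(r/2 + 1/4)) := by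
  obtain ⟨s, hs_def⟩ : ∃ s : ℝ, s = r + 1/2 := ⟨_, rfl⟩
  have hs1 : 1 < s := by rw [hs_def]; linarith
  have hs0 : 0 < s := by linarith
  obtain ⟨j₀, hj₀⟩ : ∃ j₀ : ℕ, j₀ = max (⌈W^2/(r - 1/2)⌉₊ + 1) (⌈s⌉₊ + 1) := ⟨_, rfl⟩
  have hj₀W : W^2/(r-1/2) ≤ (j₀:ℝ) := by
    have h1 : W^2/(r-1/2) ≤ (⌈W^2/(r - 1/2)⌉₊ : ℝ) := Nat.le_ceil _
    have h2 : (⌈W^2/(r - 1/2)⌉₊ : ℝ) ≤ (j₀:ℝ) := by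
      have : ⌈W^2/(r - 1/2)⌉₊ ≤ j₀ := by rw [hj₀]; exact le_trans (Nat.le_succ _) (le_max_left _ _)
      exact_mod_cast this
    linarith
  have hj₀s : s < (j₀:ℝ) := by
    have h1 : s ≤ (⌈s⌉₊ : ℝ) := Nat.le_ceil _
    have h2 : (⌈s⌉₊ : ℝ) + 1 ≤ (j₀:ℝ) := by
      have : ⌈s⌉₊ + 1 ≤ j₀ := by rw [hj₀]; exact le_max_right _ _
      exact_mod_cast this
    linarith
  obtain ⟨Csq, hCsq⟩ : ∃ c : ℝ, c = (1+W)^(2*j₀) * ((j₀:ℝ)+1)^s := ⟨_, rfl⟩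
  have h1W : (1:ℝ) ≤ 1 + W := by linarith
  have hCsq1 : 1 ≤ Csq := by
    rw [hCsq]
    have a1 : (1:ℝ) ≤ (1+W)^(2*j₀) := one_le_pow₀ h1W
    have a2 : (1:ℝ) ≤ ((j₀:ℝ)+1)^s := by
      apply Real.one_le_rpow ?_ (le_of_lt hs0)
      have := Nat.cast_nonneg (α := ℝ) j₀
      linarith
    nlinarith
  have hCsq0 : 0 < Csq := by linarith
  refine ⟨Real.sqrt Csq, Real.sqrt_pos.mpr hCsq0, ?_⟩
  intro z hz1 hz2
  -- main squared claim
  have main : ∀ n : ℕ, Complex.abs (gseq z n) ^ 2 * ((n:ℝ)+1) ^ s ≤ Csq := by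
    intro n
    induction n with
    | zero => simpa [gseq] using hCsq1
    | succ n ih =>
      rcases le_or_gt (n+1+1) (j₀+1) with hcase | hcase
      · -- small n : crude bound
        have hc := gseq_crude z hz2 (n+1)
        have hc2 : Complex.abs (gseq z (n+1)) ^ 2 ≤ (1+W)^(2*(n+1)) := by
          have := pow_le_pow_left₀ (AbsoluteValue.nonneg Complex.abs _) hc 2
          calc Complex.abs (gseq z (n+1)) ^ 2 ≤ ((1+W)^(n+1))^2 := this
            _ = (1+W)^(2*(n+1)) := by rw [← pow_mul, Nat.mul_comm]
        have hc3 : ((1:ℝ)+W)^(2*(n+1)) ≤ (1+W)^(2*j₀) := by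
          apply pow_le_pow_right₀ h1W
          omega
        have hc4 : (((n+1:ℕ):ℝ)+1) ^ s ≤ ((j₀:ℝ)+1)^s := by
          apply Real.rpow_le_rpow (by positivity) ?_ (le_of_lt hs0)
          push_cast
          have : (n:ℝ) + 1 + 1 ≤ (j₀:ℝ) + 1 := by exact_mod_cast hcase
          linarith
        calc Complex.abs (gseq z (n+1)) ^ 2 * (((n+1:ℕ):ℝ)+1) ^ s
            ≤ (1+W)^(2*j₀) * ((j₀:ℝ)+1)^s := by
              apply mul_le_mul (le_trans hc2 hc3) hc4 (by positivity) (by positivity)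
          _ = Csq := hCsq.symm
      · -- large n: contraction factor
        have hnj : (j₀:ℝ) ≤ (n:ℝ) := by
          have : j₀ ≤ n := by omega
          exact_mod_cast this
        have hn1 : (0:ℝ) < (n:ℝ)+1 := by positivity
        have hn2 : (0:ℝ) < (n:ℝ)+2 := by positivity
        -- factor bound
        have hfac : Complex.abs (1 - (z * ((n:ℂ)+1))⁻¹) ^ 2 ≤ 1 - s/((n:ℝ)+1) := by
          have hzne : z ≠ 0 := by
            intro h; rw [h] at hz1; simp at hz1; linarith
          have hinv : (z * ((n:ℂ)+1))⁻¹ = z⁻¹ * ((n:ℂ)+1)⁻¹ := by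
            rw [mul_inv]
          rw [Complex.sq_abs, hinv]
          have hre : (z⁻¹ * ((n:ℂ)+1)⁻¹).re = (z⁻¹).re / ((n:ℝ)+1) := by
            have h5 : ((n:ℂ)+1)⁻¹ = ((((n:ℝ)+1)⁻¹ : ℝ) : ℂ) := by push_cast; ring
            rw [h5]
            simp only [Complex.mul_re, Complex.ofReal_re, Complex.ofReal_im, mul_zero, sub_zero]
            rw [div_eq_mul_inv]
          have hnsq : Complex.normSq (z⁻¹ * ((n:ℂ)+1)⁻¹) = Complex.normSq z⁻¹ / ((n:ℝ)+1)^2 := by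
            rw [Complex.normSq_mul]
            congr 1
            have : ((n:ℂ)+1)⁻¹ = (((n:ℝ)+1)⁻¹ : ℝ) := by push_cast; ring
            rw [this, Complex.normSq_ofReal]
            field_simp
          have expand : Complex.normSq (1 - z⁻¹ * ((n:ℂ)+1)⁻¹)
              = 1 - 2 * (z⁻¹ * ((n:ℂ)+1)⁻¹).re + Complex.normSq (z⁻¹ * ((n:ℂ)+1)⁻¹) := by
            simp only [Complex.normSq_apply, Complex.sub_re, Complex.sub_im, Complex.one_re,
              Complex.one_im]
            ring
          rw [expand, hre, hnsq]
          have hWsq : Complex.normSq z⁻¹ ≤ W^2 := by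
            rw [← Complex.sq_abs]
            exact pow_le_pow_left₀ (AbsoluteValue.nonneg _ _) hz2 2
          have hb1 : Complex.normSq z⁻¹ / ((n:ℝ)+1)^2 ≤ (r - 1/2)/((n:ℝ)+1) := by
            rw [div_le_div_iff₀ (by positivity) hn1]
            have hWn : W^2 ≤ (r-1/2) * ((n:ℝ)+1) := by
              have hr2 : (0:ℝ) < r - 1/2 := by linarith
              have := hj₀W
              rw [div_le_iff₀ hr2] at this
              nlinarith
            nlinarith [Complex.normSq_nonneg z⁻¹]
          have hb2 : r / ((n:ℝ)+1) ≤ (z⁻¹).re / ((n:ℝ)+1) := by gcongr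
          have heq : 1 - 2*(r/((n:ℝ)+1)) + (r-1/2)/((n:ℝ)+1) = 1 - s/((n:ℝ)+1) := by
            field_simp [hs_def]
            linarith [hs_def]
          linarith
        -- now the rpow ratio bound
        have hfac0 : (0:ℝ) ≤ 1 - s/((n:ℝ)+1) := by
          rw [sub_nonneg, div_le_one hn1]
          linarith
        have hratio : (1 - s/((n:ℝ)+1)) * (((n:ℝ)+2)/((n:ℝ)+1)) ^ s ≤ 1 := by
          have e1 : 1 - s/((n:ℝ)+1) ≤ Real.exp (-(s/((n:ℝ)+1))) := by
            have := Real.add_one_le_exp (-(s/((n:ℝ)+1)))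
            linarith
          have e2 : (((n:ℝ)+2)/((n:ℝ)+1)) ^ s ≤ Real.exp (s/((n:ℝ)+1)) := by
            rw [Real.rpow_def_of_pos (by positivity)]
            apply Real.exp_le_exp.mpr
            have hlog : Real.log (((n:ℝ)+2)/((n:ℝ)+1)) ≤ 1/((n:ℝ)+1) := by
              have := Real.log_le_sub_one_of_pos (show (0:ℝ) < ((n:ℝ)+2)/((n:ℝ)+1) by positivity)
              have heq : ((n:ℝ)+2)/((n:ℝ)+1) - 1 = 1/((n:ℝ)+1) := by
                field_simp
                norm_num
              linarith
            calc Real.log (((n:ℝ)+2)/((n:ℝ)+1)) * s ≤ (1/((n:ℝ)+1)) * s := by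
                  apply mul_le_mul_of_nonneg_right hlog (le_of_lt hs0)
              _ = s/((n:ℝ)+1) := by ring
            
          calc (1 - s/((n:ℝ)+1)) * (((n:ℝ)+2)/((n:ℝ)+1)) ^ s
              ≤ Real.exp (-(s/((n:ℝ)+1))) * Real.exp (s/((n:ℝ)+1)) := by
                exact mul_le_mul e1 e2 (Real.rpow_nonneg (by positivity) s) (Real.exp_nonneg _)
            _ = 1 := by rw [← Real.exp_add]; simp
        -- combine
        have hsplit : Complex.abs (gseq z (n+1)) ^ 2 = Complex.abs (gseq z n) ^2 * Complex.abs (1 - (z * ((n:ℂ)+1))⁻¹) ^ 2 := by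
          rw [gseq_succ, map_mul, mul_pow]
        have hrw : (((n+1:ℕ):ℝ)+1) ^ s = ((n:ℝ)+1)^s * (((n:ℝ)+2)/((n:ℝ)+1)) ^ s := by
          rw [← Real.mul_rpow (by positivity) (by positivity)]
          congr 1
          push_cast
          field_simp
          ring
        rw [hsplit, hrw]
        calc Complex.abs (gseq z n) ^2 * Complex.abs (1 - (z * ((n:ℂ)+1))⁻¹) ^ 2 * (((n:ℝ)+1)^s * (((n:ℝ)+2)/((n:ℝ)+1)) ^ s)
            = (Complex.abs (gseq z n) ^2 * ((n:ℝ)+1)^s) * (Complex.abs (1 - (z * ((n:ℂ)+1))⁻¹) ^ 2 * (((n:ℝ)+2)/((n:ℝ)+1)) ^ s) := by ring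
          _ ≤ Csq * ((1 - s/((n:ℝ)+1)) * (((n:ℝ)+2)/((n:ℝ)+1)) ^ s) := by
              apply mul_le_mul ih ?_ (by positivity) (le_of_lt hCsq0)
              apply mul_le_mul_of_nonneg_right hfac (by positivity)
          _ ≤ Csq * 1 := by
              apply mul_le_mul_of_nonneg_left hratio (le_of_lt hCsq0)
          _ = Csq := mul_one Csq
  -- conclude
  intro n
  have h := main n
  have hn1 : (0:ℝ) < ((n:ℝ)+1) ^ s := Real.rpow_pos_of_pos (by positivity) s
  have h2 : Complex.abs (gseq z n) ^ 2 ≤ Csq * ((n:ℝ)+1) ^ (-s) := by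
    rw [Real.rpow_neg (by positivity)]
    rw [← le_div_iff₀ hn1] at h
    rw [div_eq_mul_inv] at h
    exact h
  have h3 : Complex.abs (gseq z n) ≤ Real.sqrt (Csq * ((n:ℝ)+1) ^ (-s)) := by
    rw [← Real.sqrt_sq (AbsoluteValue.nonneg Complex.abs _)]
    apply Real.sqrt_le_sqrt
    simpa [sq] using h2
  calc Complex.abs (gseq z n) ≤ Real.sqrt (Csq * ((n:ℝ)+1) ^ (-s)) := h3
    _ = Real.sqrt Csq * ((n:ℝ)+1) ^ (-(r/2+1/4)) := by
        rw [Real.sqrt_mul (le_of_lt hCsq0)]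
        congr 1
        rw [Real.sqrt_eq_rpow, ← Real.rpow_mul (by positivity)]
        congr 1
        rw [hs_def]; ring


lemma gseq_zero' (z : ℂ) : gseq z 0 = 1 := Finset.prod_range_zero _



lemma disc_props {z : ℂ} (hz : Complex.abs (z - 1) < 1) : z ≠ 0 ∧ 1/2 < (z⁻¹).re := by
  have h : Complex.normSq (z - 1) < 1 := by
    rw [← Complex.sq_abs]
    nlinarith [AbsoluteValue.nonneg Complex.abs (z-1)]
  have h2 : Complex.normSq z < 2 * z.re := by
    simp only [Complex.normSq_apply, Complex.sub_re, Complex.sub_im, Complex.one_re,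
      Complex.one_im] at h ⊢
    nlinarith
  have hz0 : z ≠ 0 := by
    intro h0
    rw [h0] at h2
    simp at h2
  have hnsq : 0 < Complex.normSq z := Complex.normSq_pos.mpr hz0
  refine ⟨hz0, ?_⟩
  rw [Complex.inv_re]
  rw [lt_div_iff₀ hnsq]
  linarith

lemma gseq_decay {z : ℂ} (hz : Complex.abs (z - 1) < 1) :
    ∃ C > 0, ∃ t : ℝ, 1/2 < t ∧ ∀ n : ℕ, Complex.abs (gseq z n) ≤ C * ((n:ℝ)+1) ^ (-t) := by
  obtain ⟨hz0, hre⟩ := disc_props hz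
  obtain ⟨C, hC, h⟩ := gseq_bound (r := (z⁻¹).re) (W := Complex.abs z⁻¹) hre
    (AbsoluteValue.nonneg _ _)
  exact ⟨C, hC, (z⁻¹).re/2 + 1/4, by linarith, fun n => h z le_rfl le_rfl n⟩

lemma gseq_sq_summable {z : ℂ} (hz : Complex.abs (z - 1) < 1) :
    Summable (fun n : ℕ => Complex.abs (gseq z n) ^ 2) := by
  obtain ⟨C, hC, t, ht, h⟩ := gseq_decay hz
  apply Summable.of_nonneg_of_le (fun n => by positivity)
    (f := fun n : ℕ => C^2 * ((n:ℝ)+1) ^ (-(2*t)))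
  · intro n
    have h1 : Complex.abs (gseq z n) ^ 2 ≤ (C * ((n:ℝ)+1) ^ (-t))^2 :=
      pow_le_pow_left₀ (AbsoluteValue.nonneg _ _) (h n) 2
    calc Complex.abs (gseq z n) ^ 2 ≤ (C * ((n:ℝ)+1) ^ (-t))^2 := h1
      _ = C^2 * ((n:ℝ)+1) ^ (-(2*t)) := by
          rw [mul_pow]
          congr 1
          rw [← Real.rpow_natCast (((n:ℝ)+1) ^ (-t)) 2, ← Real.rpow_mul (by positivity)]
          congr 1
          push_cast
          ring
  · exact (summable_rpow_aux (by linarith)).mul_left _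

lemma gseq_tendsto_zero {z : ℂ} (hz : Complex.abs (z - 1) < 1) :
    Tendsto (fun n => gseq z n) atTop (nhds 0) := by
  obtain ⟨C, hC, t, ht, h⟩ := gseq_decay hz
  apply squeeze_zero_norm (fun n => h n)
  have h1 : Tendsto (fun n : ℕ => ((n:ℝ)+1)) atTop atTop :=
    tendsto_atTop_add_const_right _ 1 tendsto_natCast_atTop_atTop
  have h2 : Tendsto (fun n : ℕ => ((n:ℝ)+1) ^ (-t)) atTop (nhds 0) :=
    (tendsto_rpow_neg_atTop (by linarith)).comp h1
  simpa using h2.const_mul C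

-- summability of the dominating row-sum sequence
lemma gseq_row_summable {z : ℂ} (hz : Complex.abs (z - 1) < 1) (B : ℝ) :
    Summable (fun n : ℕ => Complex.abs (gseq z n) / ((n:ℝ)+1) * (Real.sqrt ((n:ℝ)+1) * B)) := by
  obtain ⟨C, hC, t, ht, h⟩ := gseq_decay hz
  apply Summable.of_norm
  apply Summable.of_nonneg_of_le (fun n => norm_nonneg _)
    (f := fun n : ℕ => (C * |B|) * ((n:ℝ)+1) ^ (-(t + 1/2)))
  · intro n
    have hn1 : (0:ℝ) < (n:ℝ)+1 := by positivity
    rw [Real.norm_eq_abs, abs_mul, abs_mul, abs_div]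
    rw [_root_.abs_of_nonneg (AbsoluteValue.nonneg _ _), _root_.abs_of_pos hn1,
      _root_.abs_of_nonneg (Real.sqrt_nonneg _)]
    have hsq : Real.sqrt ((n:ℝ)+1) = ((n:ℝ)+1) ^ ((1:ℝ)/2) := Real.sqrt_eq_rpow _
    calc Complex.abs (gseq z n) / ((n:ℝ)+1) * (Real.sqrt ((n:ℝ)+1) * |B|)
        ≤ (C * ((n:ℝ)+1) ^ (-t)) / ((n:ℝ)+1) * (Real.sqrt ((n:ℝ)+1) * |B|) := by
          gcongr
          exact h n
      _ = (C * |B|) * ((n:ℝ)+1) ^ (-(t + 1/2)) := by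
          rw [hsq]
          rw [div_eq_mul_inv, ← Real.rpow_neg_one ((n:ℝ)+1)]
          rw [show (-(t+1/2)) = (-t) + (-1) + 1/2 by ring]
          rw [Real.rpow_add hn1, Real.rpow_add hn1]
          ring
  · exact (summable_rpow_aux (by linarith)).mul_left _

-- tail sum identity
lemma gseq_tail_hasSum {z : ℂ} (hz : Complex.abs (z - 1) < 1) (k : ℕ) :
    HasSum (fun m : ℕ => if k ≤ m then gseq z m / ((m:ℂ)+1) else 0) (z * gseq z k) := by
  obtain ⟨hz0, _⟩ := disc_props hz
  obtain ⟨C, hC, t, ht, h⟩ := gseq_decay hz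
  have habs : ∀ m : ℕ, ‖(if k ≤ m then gseq z m / ((m:ℂ)+1) else 0)‖
      ≤ C * ((m:ℝ)+1) ^ (-(t+1)) := by
    intro m
    have hm1 : (0:ℝ) < (m:ℝ)+1 := by positivity
    by_cases hkm : k ≤ m
    · simp only [hkm, if_true]
      rw [norm_div]
      have habsm : ‖((m:ℂ)+1)‖ = (m:ℝ)+1 := by
        rw [show ((m:ℂ)+1) = ((m+1:ℕ):ℂ) by push_cast; ring]
        rw [Complex.norm_natCast]
        push_cast; ring
      rw [habsm]
      calc ‖gseq z m‖ / ((m:ℝ)+1) ≤ (C * ((m:ℝ)+1) ^ (-t)) / ((m:ℝ)+1) := by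
            gcongr
            rw [Complex.norm_eq_abs]
            exact h m
        _ = C * ((m:ℝ)+1) ^ (-(t+1)) := by
            rw [div_eq_mul_inv, ← Real.rpow_neg_one ((m:ℝ)+1), mul_assoc,
              ← Real.rpow_add hm1]
            congr 1
            ring
    · simp only [hkm, if_false]
      simp
      positivity
  have hsummable : Summable (fun m : ℕ => if k ≤ m then gseq z m / ((m:ℂ)+1) else 0) := by
    apply Summable.of_norm
    exact Summable.of_nonneg_of_le (fun n => norm_nonneg _) habs
      ((summable_rpow_aux (by linarith)).mul_left _)
  -- partial sums telescope
  have hpartial : ∀ N : ℕ, k ≤ N →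
      ∑ m ∈ Finset.range N, (if k ≤ m then gseq z m / ((m:ℂ)+1) else 0)
        = z * gseq z k - z * gseq z N := by
    intro N
    induction N with
    | zero =>
      intro hN
      have hk : k = 0 := by omega
      subst hk
      simp
    | succ N ihN =>
      intro hN
      rcases Nat.lt_or_ge k (N+1) with hlt | hge
      · have hkN : k ≤ N := by omega
        rw [Finset.sum_range_succ, ihN hkN, if_pos hkN, gseq_rec z hz0 N]
        ring
      · have hk : k = N+1 := by omega
        subst hk
        have hzero : ∑ m ∈ Finset.range (N+1), (if N+1 ≤ m then gseq z m / ((m:ℂ)+1) else 0) = 0 := by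
          apply Finset.sum_eq_zero
          intro m hm
          rw [Finset.mem_range] at hm
          simp [Nat.not_le.mpr hm]
        rw [hzero]
        ring
  have htendsto : Tendsto (fun N => ∑ m ∈ Finset.range N, (if k ≤ m then gseq z m / ((m:ℂ)+1) else 0))
      atTop (nhds (z * gseq z k)) := by
    apply Tendsto.congr' (f₁ := fun N => z * gseq z k - z * gseq z N)
    · filter_upwards [eventually_ge_atTop k] with N hN
      exact (hpartial N hN).symm
    · have : Tendsto (fun N => z * gseq z N) atTop (nhds (z * 0)) :=
        (gseq_tendsto_zero hz).const_mul z
      rw [mul_zero] at this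
      simpa using (tendsto_const_nhds (x := z * gseq z k)).sub this
  have h1 := hsummable.hasSum
  have h2 := h1.tendsto_sum_nat
  have := tendsto_nhds_unique h2 htendsto
  rwa [this] at h1




lemma lp_summable_sq (x : ELL) : Summable (fun n => ‖x n‖ ^ 2) := by
  have h := (lp.memℓp x).summable (by norm_num : 0 < (2:ℝ≥0∞).toReal)
  refine h.congr fun n => ?_
  rw [show ((2:ℝ≥0∞).toReal) = ((2:ℕ):ℝ) by norm_num, Real.rpow_natCast]

lemma lp_sum_sq_le (x : ELL) (s : Finset ℕ) : ∑ n ∈ s, ‖x n‖^2 ≤ ‖x‖^2 := by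
  have h1 : ∑ n ∈ s, ‖x n‖^2 ≤ ∑' n, ‖x n‖^2 :=
    Summable.sum_le_tsum s (fun n _ => by positivity) (lp_summable_sq x)
  have h2 : ‖x‖^2 = ∑' n, ‖x n‖^2 := by
    have := lp.norm_rpow_eq_tsum (p := 2) (by norm_num) x
    rw [show ((2:ℝ≥0∞).toReal) = ((2:ℕ):ℝ) by norm_num] at this
    rw [← Real.rpow_natCast ‖x‖ 2, this]
    exact tsum_congr fun n => (Real.rpow_natCast _ 2)
  linarith

lemma lp_sum_abs_le (x : ELL) (n : ℕ) :
    ∑ k ∈ Finset.range (n+1), ‖x k‖ ≤ Real.sqrt ((n:ℝ)+1) * ‖x‖ := by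
  have hcs := sum_mul_sq_le_sq_mul_sq (Finset.range (n+1)) (fun _ => (1:ℝ)) (fun k => ‖x k‖)
  simp only [one_mul, one_pow] at hcs
  have hsum1 : ∑ _k ∈ Finset.range (n+1), (1:ℝ) = ((n:ℝ)+1) := by
    rw [Finset.sum_const, Finset.card_range, nsmul_eq_mul]
    push_cast
    ring
  rw [hsum1] at hcs
  have h2 : ∑ k ∈ Finset.range (n+1), ‖x k‖^2 ≤ ‖x‖^2 := lp_sum_sq_le x _
  have hb : (∑ k ∈ Finset.range (n+1), ‖x k‖)^2 ≤ (((n:ℝ)+1)) * ‖x‖^2 := by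
    nlinarith [Finset.sum_nonneg (fun k (_ : k ∈ Finset.range (n+1)) => norm_nonneg (x k))]
  have hnn : (0:ℝ) ≤ ∑ k ∈ Finset.range (n+1), ‖x k‖ :=
    Finset.sum_nonneg (fun k _ => norm_nonneg (x k))
  have := Real.sqrt_le_sqrt hb
  rw [Real.sqrt_sq hnn, Real.sqrt_mul (by positivity), Real.sqrt_sq (norm_nonneg x)] at this
  exact this

lemma summable_gseq_mul {z : ℂ} (hz : Complex.abs (z - 1) < 1) (x : ELL) :
    Summable (fun n => gseq z n * x n) := by
  apply Summable.of_norm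
  apply Summable.of_nonneg_of_le (fun n => norm_nonneg _)
    (f := fun n => (Complex.abs (gseq z n) ^ 2 + ‖x n‖^2)/2)
  · intro n
    rw [norm_mul]
    have h1 : ‖gseq z n‖ = Complex.abs (gseq z n) := rfl
    rw [h1]
    nlinarith [AbsoluteValue.nonneg Complex.abs (gseq z n), norm_nonneg (x n),
      sq_nonneg (Complex.abs (gseq z n) - ‖x n‖)]
  · exact ((gseq_sq_summable hz).add (lp_summable_sq x)).div_const 2

def lfun (z : ℂ) (x : ELL) : ℂ := ∑' n, gseq z n * x n

lemma lfun_cesaro {z : ℂ} (hz : Complex.abs (z - 1) < 1) (C : ELL →L[ℂ] ELL)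
    (hC : IsCesaro C) (x : ELL) : lfun z (C x) = z * lfun z x := by
  classical
  set F : ℕ × ℕ → ℂ := fun p => if p.2 ≤ p.1 then (gseq z p.1 / ((p.1:ℂ)+1)) * x p.2 else 0
    with hF
  have habsm : ∀ m : ℕ, ‖((m:ℂ)+1)‖ = (m:ℝ)+1 := by
    intro m
    rw [show ((m:ℂ)+1) = ((m+1:ℕ):ℂ) by push_cast; ring, Complex.norm_natCast]
    push_cast; ring
  -- summability of F
  have hrow : ∀ n : ℕ, Summable (fun k => ‖F (n, k)‖) := by
    intro n
    apply summable_of_ne_finset_zero (s := Finset.range (n+1))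
    intro k hk
    rw [Finset.mem_range] at hk
    have : ¬ k ≤ n := by omega
    simp [hF, this]
  have hrowsum : ∀ n : ℕ, ∑' k, ‖F (n, k)‖
      ≤ Complex.abs (gseq z n) / ((n:ℝ)+1) * (Real.sqrt ((n:ℝ)+1) * ‖x‖) := by
    intro n
    rw [tsum_eq_sum (s := Finset.range (n+1)) (by
      intro k hk
      rw [Finset.mem_range] at hk
      have : ¬ k ≤ n := by omega
      simp [hF, this])]
    have : ∀ k ∈ Finset.range (n+1), ‖F (n, k)‖ = Complex.abs (gseq z n) / ((n:ℝ)+1) * ‖x k‖ := by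
      intro k hk
      rw [Finset.mem_range] at hk
      have hkn : k ≤ n := by omega
      simp only [hF, hkn, if_true]
      rw [norm_mul, norm_div, habsm]
      rfl
    rw [Finset.sum_congr rfl this, ← Finset.mul_sum]
    exact mul_le_mul_of_nonneg_left (lp_sum_abs_le x n) (by positivity)
  have hFnorm : Summable (fun p : ℕ × ℕ => ‖F p‖) := by
    rw [summable_prod_of_nonneg (fun p => norm_nonneg _)]
    exact ⟨hrow, Summable.of_nonneg_of_le (fun n => tsum_nonneg (fun k => norm_nonneg _))
      hrowsum (gseq_row_summable hz ‖x‖)⟩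
  have hFsummable : Summable F := Summable.of_norm hFnorm
  have hL : lfun z (C x) = ∑' (n:ℕ), ∑' (k:ℕ), F (n, k) := by
    unfold lfun
    apply tsum_congr
    intro n
    rw [tsum_eq_sum (s := Finset.range (n+1)) (by
      intro k hk
      rw [Finset.mem_range] at hk
      have : ¬ k ≤ n := by omega
      simp [hF, this])]
    rw [hC x n]
    have hterms : ∀ k ∈ Finset.range (n+1), F (n, k) = (gseq z n / ((n:ℂ)+1)) * x k := by
      intro k hk
      rw [Finset.mem_range] at hk
      have hkn : k ≤ n := by omega
      simp [hF, hkn]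
    rw [Finset.sum_congr rfl hterms, ← Finset.mul_sum]
    rw [div_mul_eq_mul_div, mul_div_assoc]
  have hR : ∑' (k:ℕ), ∑' (n:ℕ), F (n, k) = z * lfun z x := by
    unfold lfun
    rw [← tsum_mul_left]
    apply tsum_congr
    intro k
    have h1 := (gseq_tail_hasSum hz k).mul_right (x k)
    have h2 : (fun n => (if k ≤ n then gseq z n / ((n:ℂ)+1) else 0) * x k)
        = fun n => F (n, k) := by
      funext n
      by_cases hkn : k ≤ n <;> simp [hF, hkn]
    rw [h2] at h1
    rw [h1.tsum_eq]
    ring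
  rw [hL, ← Summable.tsum_comm (f := fun n k => F (n, k)) hFsummable, hR]




lemma step_real (N : ℕ) (xr xi yr yi : ℝ) (h0 : N = 0 → (xr = 0 ∧ xi = 0)) :
    (yr^2+yi^2)/((N:ℝ)+1) ≤ (xr^2+xi^2)/(N:ℝ)
      + 2*((yr^2+yi^2) - (yr*xr + yi*xi))/((N:ℝ)+1) - (yr^2+yi^2)/((N:ℝ)+1)^2 := by
  rcases Nat.eq_zero_or_pos N with hN | hN
  · obtain ⟨hxr, hxi⟩ := h0 hN
    subst hxr; subst hxi; subst hN
    push_cast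
    ring_nf
    nlinarith [sq_nonneg yr, sq_nonneg yi]
  · have hu : (1:ℝ) ≤ (N:ℝ) := by exact_mod_cast hN
    have hu0 : (0:ℝ) < (N:ℝ) := by linarith
    have hu1 : (0:ℝ) < (N:ℝ)+1 := by linarith
    have key : (xr^2+xi^2)/(N:ℝ) + 2*((yr^2+yi^2) - (yr*xr + yi*xi))/((N:ℝ)+1)
        - (yr^2+yi^2)/((N:ℝ)+1)^2 - (yr^2+yi^2)/((N:ℝ)+1)
        = ((((N:ℝ)+1)*xr - (N:ℝ)*yr)^2 + (((N:ℝ)+1)*xi - (N:ℝ)*yi)^2) / ((N:ℝ)*((N:ℝ)+1)^2) := by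
      field_simp
      ring
    have hpos : 0 ≤ ((((N:ℝ)+1)*xr - (N:ℝ)*yr)^2 + (((N:ℝ)+1)*xi - (N:ℝ)*yi)^2) / ((N:ℝ)*((N:ℝ)+1)^2) := by
      positivity
    linarith [key ▸ hpos]

lemma step_cx (N : ℕ) (x y : ℂ) (h0 : N = 0 → x = 0) :
    Complex.normSq y/((N:ℝ)+1) ≤ Complex.normSq x/(N:ℝ)
      + 2*((starRingEnd ℂ y) * (y - x)).re/((N:ℝ)+1) - Complex.normSq y/((N:ℝ)+1)^2 := by
  have h := step_real N x.re x.im y.re y.im (fun hN => by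
    obtain h := h0 hN
    rw [h]
    exact ⟨rfl, rfl⟩)
  have e1 : Complex.normSq x = x.re^2 + x.im^2 := by rw [Complex.normSq_apply]; ring
  have e2 : Complex.normSq y = y.re^2 + y.im^2 := by rw [Complex.normSq_apply]; ring
  have e3 : ((starRingEnd ℂ) y * (y - x)).re = (y.re^2+y.im^2) - (y.re*x.re + y.im*x.im) := by
    simp only [Complex.mul_re, Complex.conj_re, Complex.conj_im, Complex.sub_re, Complex.sub_im]
    ring
  rw [e1, e2, e3]
  exact h

-- partial sums inequality
lemma hardy_partial (a : ℕ → ℂ) (N : ℕ) :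
    Complex.normSq (∑ k ∈ Finset.range N, a k) / (N:ℝ)
      ≤ ∑ n ∈ Finset.range N,
        (2*((starRingEnd ℂ) ((∑ k ∈ Finset.range (n+1), a k)/((n:ℂ)+1)) * a n).re
          - ‖(∑ k ∈ Finset.range (n+1), a k)/((n:ℂ)+1)‖^2) := by
  induction N with
  | zero => simp
  | succ N ih =>
    set x := ∑ k ∈ Finset.range N, a k with hx
    set y := ∑ k ∈ Finset.range (N+1), a k with hy
    have hyx : a N = y - x := by
      rw [hy, hx, Finset.sum_range_succ]; ring
    have hbn : (starRingEnd ℂ) (y/((N:ℂ)+1)) * a N = ((starRingEnd ℂ) y * (y - x)) / ((N:ℂ)+1) := by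
      rw [hyx, map_div₀]
      have : (starRingEnd ℂ) ((N:ℂ)+1) = ((N:ℂ)+1) := by
        rw [map_add, map_one, Complex.conj_natCast]
      rw [this]
      ring
    have hre : ((starRingEnd ℂ) (y/((N:ℂ)+1)) * a N).re
        = ((starRingEnd ℂ) y * (y - x)).re / ((N:ℝ)+1) := by
      rw [hbn]
      have hcast : ((N:ℂ)+1) = (((N:ℝ)+1 : ℝ) : ℂ) := by push_cast; ring
      rw [hcast, Complex.div_ofReal_re]
    have hnormb : ‖y/((N:ℂ)+1)‖^2 = Complex.normSq y / ((N:ℝ)+1)^2 := by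
      rw [norm_div, div_pow]
      congr 1
      · rw [Complex.norm_eq_abs, Complex.sq_abs]
      · rw [show ((N:ℂ)+1) = ((N+1:ℕ):ℂ) by push_cast; ring, Complex.norm_natCast]
        push_cast; ring
    have hstep := step_cx N x y (fun hN => by
      rw [hx, hN]
      simp)
    have hLcast : (((N+1:ℕ)):ℝ) = (N:ℝ)+1 := by push_cast; ring
    rw [hLcast, Finset.sum_range_succ, ← hy, hre, hnormb]
    have h2A : 2 * (((starRingEnd ℂ) y * (y - x)).re / ((N:ℝ) + 1))
        = 2 * ((starRingEnd ℂ) y * (y - x)).re / ((N:ℝ) + 1) := by ring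
    linarith [ih, hstep, h2A]


lemma lp_norm_sq (x : ELL) : ‖x‖^2 = ∑' n, ‖x n‖^2 := by
  have h := lp.norm_rpow_eq_tsum (p := 2) (by norm_num) x
  rw [show ((2:ℝ≥0∞).toReal) = ((2:ℕ):ℝ) by norm_num] at h
  rw [← Real.rpow_natCast ‖x‖ 2, h]
  exact tsum_congr fun n => (Real.rpow_natCast _ 2)

lemma cesaro_contraction (C : ELL →L[ℂ] ELL) (hC : IsCesaro C) (a : ELL) :
    ‖C a - a‖ ≤ ‖a‖ := by
  set b := C a with hb
  have hsumInner := lp.summable_inner (𝕜 := ℂ) b a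
  have hinner_eq : ∀ n : ℕ, (inner ℂ (b n) (a n) : ℂ) = (starRingEnd ℂ) (b n) * a n :=
    fun n => RCLike.inner_apply' _ _
  have hsumre : Summable (fun n => ((starRingEnd ℂ) (b n) * a n).re) := by
    have h1 := (Complex.hasSum_re hsumInner.hasSum).summable
    exact h1.congr fun n => by rw [hinner_eq n]
  have hsum2b := lp_summable_sq b
  -- the key inequality via partial sums
  have hkey : ∑' n, ‖b n‖^2 ≤ 2 * ∑' n, ((starRingEnd ℂ) (b n) * a n).re := by
    have hd : Summable (fun n => 2*((starRingEnd ℂ) (b n) * a n).re - ‖b n‖^2) :=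
      (hsumre.mul_left 2).sub hsum2b
    have h0 : 0 ≤ ∑' n, (2*((starRingEnd ℂ) (b n) * a n).re - ‖b n‖^2) := by
      apply ge_of_tendsto hd.hasSum.tendsto_sum_nat
      filter_upwards with N
      have hp := hardy_partial (fun n => a n) N
      have hterm : ∀ n ∈ Finset.range N,
          (2*((starRingEnd ℂ) ((∑ k ∈ Finset.range (n+1), a k)/((n:ℂ)+1)) * a n).re
            - ‖(∑ k ∈ Finset.range (n+1), a k)/((n:ℂ)+1)‖^2)
          = 2*((starRingEnd ℂ) (b n) * a n).re - ‖b n‖^2 := by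
        intro n _
        rw [hC a n]
      rw [Finset.sum_congr rfl hterm] at hp
      have hnn : 0 ≤ Complex.normSq (∑ k ∈ Finset.range N, a k) / (N:ℝ) :=
        div_nonneg (Complex.normSq_nonneg _) (Nat.cast_nonneg N)
      linarith
    have hsub := Summable.tsum_sub (hsumre.mul_left 2) hsum2b
    rw [hsub] at h0
    rw [tsum_mul_left] at h0
    linarith
  -- norm identity
  have hid : ‖b - a‖^2 = ‖b‖^2 - 2 * (RCLike.re (⟪b, a⟫_ℂ)) + ‖a‖^2 := norm_sub_sq b a
  have hre2 : RCLike.re (⟪b, a⟫_ℂ) = ∑' n, ((starRingEnd ℂ) (b n) * a n).re := by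
    have h1 : (⟪b, a⟫_ℂ) = ∑' n, (inner ℂ (b n) (a n) : ℂ) := lp.inner_eq_tsum b a
    rw [show (RCLike.re : ℂ →+ ℝ) = Complex.reAddGroupHom from rfl]
    show (⟪b, a⟫_ℂ).re = _
    rw [h1, Complex.re_tsum hsumInner]
    exact tsum_congr fun n => by rw [hinner_eq n]
  have hble : ‖b - a‖^2 ≤ ‖a‖^2 := by
    rw [hid, hre2]
    have hbn2 : ‖b‖^2 = ∑' n, ‖b n‖^2 := lp_norm_sq b
    linarith [hkey, hbn2 ▸ hkey]
  have h := Real.sqrt_le_sqrt hble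
  rwa [Real.sqrt_sq (norm_nonneg _), Real.sqrt_sq (norm_nonneg _)] at h



lemma gseq_differentiableOn (n : ℕ) :
    DifferentiableOn ℂ (fun z => gseq z n) {z : ℂ | z ≠ 0} := by
  induction n with
  | zero =>
    apply DifferentiableOn.congr (f := fun _ => (1:ℂ))
    · exact differentiableOn_const 1
    · intro z _; exact gseq_zero' z
  | succ n ih =>
    apply DifferentiableOn.congr
      (f := fun z => gseq z n * (1 - (z * ((n:ℂ)+1))⁻¹))
    · apply DifferentiableOn.mul ih
      apply DifferentiableOn.const_sub
      apply DifferentiableOn.inv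
      · apply DifferentiableOn.mul_const differentiableOn_id
      · intro z hz
        simp only [Set.mem_setOf_eq] at hz
        exact mul_ne_zero hz (Nat.cast_add_one_ne_zero n)
    · intro z _; exact gseq_succ z n

lemma ball_subset_ne_zero : (Metric.ball (1:ℂ) 1) ⊆ {z : ℂ | z ≠ 0} := by
  intro z hz
  rw [Metric.mem_ball, Complex.dist_eq] at hz
  exact (disc_props hz).1

-- analyticity of F m
lemma lfun_differentiableOn (x : ELL) :
    DifferentiableOn ℂ (fun z => ∑' n, gseq z n * x n) (Metric.ball (1:ℂ) 1) := by
  have hopen : IsOpen (Metric.ball (1:ℂ) 1) := Metric.isOpen_ball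
  apply TendstoLocallyUniformlyOn.differentiableOn
    (F := fun (N : ℕ) (z : ℂ) => ∑ n ∈ Finset.range N, gseq z n * x n)
    (φ := atTop)
  · rw [tendstoLocallyUniformlyOn_iff_forall_isCompact hopen]
    intro K hK hKc
    -- get uniform r, W on K
    rcases K.eq_empty_or_nonempty with hKe | hKne
    · subst hKe; simp [TendstoUniformlyOn]
    have hcont_re : ContinuousOn (fun z : ℂ => (z⁻¹).re) K := by
      apply Complex.continuous_re.comp_continuousOn
      apply ContinuousOn.inv₀ continuousOn_id
      intro z hz
      exact ball_subset_ne_zero (hK hz)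
    have hcont_abs : ContinuousOn (fun z : ℂ => Complex.abs z⁻¹) K := by
      apply Complex.continuous_abs.comp_continuousOn
      apply ContinuousOn.inv₀ continuousOn_id
      intro z hz
      exact ball_subset_ne_zero (hK hz)
    obtain ⟨zr, hzrK, hzrmin⟩ := hKc.exists_isMinOn hKne hcont_re
    obtain ⟨zw, hzwK, hzwmax⟩ := hKc.exists_isMaxOn hKne hcont_abs
    set r := ((zr)⁻¹).re with hr_def
    set W := Complex.abs (zw⁻¹) with hW_def
    have hr : 1/2 < r := by
      have := hK hzrK
      rw [Metric.mem_ball, Complex.dist_eq] at this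
      exact (disc_props this).2
    have hW : 0 ≤ W := AbsoluteValue.nonneg _ _
    obtain ⟨Cb, hCb, hbound⟩ := gseq_bound hr hW
    obtain ⟨t, ht_def⟩ : ∃ t : ℝ, t = r/2 + 1/4 := ⟨_, rfl⟩
    rw [← ht_def] at hbound
    have ht : 1/2 < t := by rw [ht_def]; linarith
    -- M-test
    apply tendstoUniformlyOn_tsum_nat
      (u := fun n => (Cb * ((n:ℝ)+1) ^ (-t)) * ‖x n‖)
    · -- summability via AM-GM
      apply Summable.of_nonneg_of_le
        (fun n : ℕ => by positivity)
        (f := fun n : ℕ => ((Cb * ((n:ℝ)+1) ^ (-t))^2 + ‖x n‖^2)/2)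
      · intro n
        nlinarith [sq_nonneg (Cb * ((n:ℝ)+1) ^ (-t) - ‖x n‖), norm_nonneg (x n),
          Real.rpow_nonneg (show (0:ℝ) ≤ (n:ℝ)+1 by positivity) (-t), hCb.le]
      · apply Summable.div_const
        apply Summable.add ?_ (lp_summable_sq x)
        have : Summable (fun n : ℕ => ((n:ℝ)+1) ^ (-(2*t))) := summable_rpow_aux (by linarith)
        apply ((this.mul_left (Cb^2)).congr fun n => ?_)
        rw [mul_pow, ← Real.rpow_natCast (((n:ℝ)+1) ^ (-t)) 2, ← Real.rpow_mul (by positivity)]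
        congr 2
        push_cast
        ring
    · intro n z hz
      rw [norm_mul]
      apply mul_le_mul_of_nonneg_right ?_ (norm_nonneg _)
      have hzD := hK hz
      rw [Metric.mem_ball, Complex.dist_eq] at hzD
      obtain ⟨hz0, hzre⟩ := disc_props hzD
      have h1 : r ≤ (z⁻¹).re := hzrmin hz
      have h2 : Complex.abs z⁻¹ ≤ W := hzwmax hz
      exact hbound z h1 h2 n
  · filter_upwards with N
    apply DifferentiableOn.fun_sum
    intro n _
    exact ((gseq_differentiableOn n).mono ball_subset_ne_zero).mul_const (x n)
  · exact hopen

lemma inv_nat_mem_ball (m : ℕ) : Complex.abs (((((m:ℕ))+1:ℕ):ℂ)⁻¹ - 1) < 1 := by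
  have hc : (0:ℝ) < ((m+1:ℕ):ℝ) := by positivity
  have h1 : ((((m:ℕ))+1:ℕ):ℂ)⁻¹ - 1 = (((((m+1:ℕ):ℝ))⁻¹ - 1 : ℝ) : ℂ) := by
    push_cast
    ring
  rw [h1, Complex.abs_ofReal]
  rw [abs_of_nonpos (by
    have : ((m+1:ℕ):ℝ)⁻¹ ≤ 1 := by
      rw [inv_le_one_iff₀]
      right
      exact_mod_cast Nat.one_le_iff_ne_zero.mpr (Nat.succ_ne_zero m)
    linarith)]
  have : (0:ℝ) < ((m+1:ℕ):ℝ)⁻¹ := by positivity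
  linarith

lemma gseq_inv_nat_ne_zero {m n : ℕ} (h : n < m) : gseq ((m:ℂ))⁻¹ n ≠ 0 := by
  induction n with
  | zero => rw [gseq_zero']; exact one_ne_zero
  | succ n ih =>
    rw [gseq_succ]
    apply mul_ne_zero (ih (by omega))
    intro hzero
    have h1 : ((m:ℂ)⁻¹ * ((n:ℂ)+1))⁻¹ = 1 := by
      have := sub_eq_zero.mp hzero
      exact this.symm
    have hm0 : (m:ℂ) ≠ 0 := by
      have : m ≠ 0 := by omega
      exact_mod_cast Nat.cast_ne_zero.mpr this
    have h2 : (m:ℂ)⁻¹ * ((n:ℂ)+1) = 1 := by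
      rw [← inv_inv ((m:ℂ)⁻¹ * ((n:ℂ)+1)), h1, inv_one]
    have h3 : ((n:ℂ)+1) = (m:ℂ) := by
      field_simp at h2
      linear_combination h2
    have h4 : ((n+1:ℕ):ℂ) = ((m:ℕ):ℂ) := by push_cast; linear_combination h3
    have : n+1 = m := Nat.cast_injective.eq_iff.mp h4
    omega

lemma gseq_inv_nat_eq_zero {m n : ℕ} (hm : 1 ≤ m) (h : m ≤ n) : gseq ((m:ℂ))⁻¹ n = 0 := by
  induction n with
  | zero => omega
  | succ n ih =>
    rcases Nat.lt_or_ge m (n+1) with hlt | hge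
    · rw [gseq_succ, ih (by omega)]
      ring
    · have hmn : m = n+1 := by omega
      subst hmn
      rw [gseq_succ]
      have hm0 : ((n:ℂ)+1) ≠ 0 := Nat.cast_add_one_ne_zero n
      have hcast : (((n+1:ℕ)):ℂ) = (n:ℂ)+1 := by push_cast; ring
      rw [hcast, inv_mul_cancel₀ hm0, inv_one, sub_self, mul_zero]

lemma triangular (x : ELL)
    (h : ∀ m : ℕ, ∑' n, gseq (((m+1:ℕ)):ℂ)⁻¹ n * x n = 0) :
    ∀ n, x n = 0 := by
  intro n
  induction n using Nat.strong_induction_on with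
  | _ n ih =>
    have h0 := h n
    rw [tsum_eq_sum (s := Finset.range (n+1)) (f := fun j => gseq (((n+1:ℕ)):ℂ)⁻¹ j * x j)
      (fun b hb => by
        rw [Finset.mem_range] at hb
        show gseq (((n+1:ℕ)):ℂ)⁻¹ b * x b = 0
        rw [gseq_inv_nat_eq_zero (by omega) (by omega : n+1 ≤ b)]
        ring)] at h0
    rw [Finset.sum_range_succ] at h0
    rw [Finset.sum_eq_zero (fun j hj => by
      rw [Finset.mem_range] at hj
      rw [ih j hj]
      ring), zero_add] at h0
    rcases mul_eq_zero.mp h0 with hg | hx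
    · exact absurd hg (gseq_inv_nat_ne_zero (by omega))
    · exact hx

lemma lfun_cesaro' {z : ℂ} (hz : Complex.abs (z - 1) < 1) (C : ELL →L[ℂ] ELL)
    (hC : IsCesaro C) (x : ELL) :
    (∑' n, gseq z n * (C x) n) = z * ∑' n, gseq z n * x n :=
  lfun_cesaro hz C hC x






lemma lfun_sub {z : ℂ} (hz : Complex.abs (z - 1) < 1) (x y : ELL) :
    (∑' n, gseq z n * (x - y) n) = (∑' n, gseq z n * x n) - ∑' n, gseq z n * y n := by
  rw [← Summable.tsum_sub (summable_gseq_mul hz x) (summable_gseq_mul hz y)]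
  apply tsum_congr
  intro n
  rw [lp.coeFn_sub]
  simp only [Pi.sub_apply]
  ring

lemma lfun_smul {z : ℂ} (hz : Complex.abs (z - 1) < 1) (c : ℂ) (x : ELL) :
    (∑' n, gseq z n * (c • x) n) = c * ∑' n, gseq z n * x n := by
  rw [← tsum_mul_left]
  apply tsum_congr
  intro n
  rw [lp.coeFn_smul]
  simp only [Pi.smul_apply, smul_eq_mul]
  ring

theorem stmt_17 (C : lp (fun _ : ℕ => ℂ) 2 →L[ℂ] lp (fun _ : ℕ => ℂ) 2)
    (hC : IsCesaro C) (M : Submodule ℂ (lp (fun _ : ℕ => ℂ) 2))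
    (hMclosed : IsClosed (M : Set (lp (fun _ : ℕ => ℂ) 2)))
    (hMbot : M ≠ ⊥) (hMtop : M ≠ ⊤)
    (hMinv : ∀ x ∈ M, C x ∈ M) :
    spectrum ℂ (restrictOp C M hMinv) = {z : ℂ | ‖z - 1‖ ≤ 1} := by
  haveI : CompleteSpace ↥M := hMclosed.completeSpace_coe
  haveI : Nontrivial ↥M := Submodule.nontrivial_iff_ne_bot.mpr hMbot
  set T := restrictOp C M hMinv with hT
  have hTcoe : ∀ m : ↥M, ((T m : ↥M) : ELL) = C (m : ELL) := fun m => rfl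
  -- forward inclusion
  have hTsub : ‖T - 1‖ ≤ 1 := by
    apply ContinuousLinearMap.opNorm_le_bound _ zero_le_one
    intro m
    rw [one_mul]
    have h1 : (T - 1) m = T m - m := rfl
    rw [h1]
    have h2 : ‖T m - m‖ = ‖((T m - m : ↥M) : ELL)‖ := rfl
    rw [h2]
    have h3 : ((T m - m : ↥M) : ELL) = C (m : ELL) - (m : ELL) := by
      rw [Submodule.coe_sub, hTcoe]
    rw [h3]
    exact cesaro_contraction C hC (m : ELL)
  have hsub : spectrum ℂ T ⊆ {z : ℂ | Complex.abs (z - 1) ≤ 1} := by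
    intro z hz
    have h1 : z - 1 ∈ spectrum ℂ T - ({1} : Set ℂ) := Set.sub_mem_sub hz rfl
    rw [spectrum.sub_singleton_eq] at h1
    have h2 : ‖z - 1‖ ≤ ‖T - algebraMap ℂ (↥M →L[ℂ] ↥M) 1‖ := spectrum.norm_le_norm_of_mem (𝕜 := ℂ) (A := ↥M →L[ℂ] ↥M) h1
    have h3 : algebraMap ℂ (↥M →L[ℂ] ↥M) 1 = 1 := map_one _
    rw [h3] at h2
    show Complex.abs (z - 1) ≤ 1
    rw [← Complex.norm_eq_abs]
    exact le_trans h2 hTsub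
  -- reverse inclusion
  have hball : Metric.ball (1:ℂ) 1 ⊆ spectrum ℂ T := by
    by_contra hnot
    obtain ⟨z₀, hz₀b, hz₀s⟩ := Set.not_subset.mp hnot
    obtain ⟨m₀, hm₀M, hm₀ne⟩ := Submodule.exists_mem_ne_zero_of_ne_bot hMbot
    have hvanish : ∀ z, z ∈ Metric.ball (1:ℂ) 1 → z ∉ spectrum ℂ T →
        (∑' n, gseq z n * m₀ n) = 0 := by
      intro z hzb hzs
      have hzd : Complex.abs (z-1) < 1 := by
        rw [← Complex.norm_eq_abs, ← Complex.dist_eq]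
        exact Metric.mem_ball.mp hzb
      have hunit : IsUnit (algebraMap ℂ (↥M →L[ℂ] ↥M) z - T) := spectrum.notMem_iff.mp hzs
      obtain ⟨u, hu⟩ := hunit
      set w : ↥M := (↑u⁻¹ : ↥M →L[ℂ] ↥M) ⟨m₀, hm₀M⟩ with hw
      have happ : (algebraMap ℂ (↥M →L[ℂ] ↥M) z - T) w = ⟨m₀, hm₀M⟩ := by
        rw [← hu, hw]
        have : (↑u : ↥M →L[ℂ] ↥M) ((↑u⁻¹ : ↥M →L[ℂ] ↥M) ⟨m₀, hm₀M⟩)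
            = ((↑u * ↑u⁻¹ : ↥M →L[ℂ] ↥M)) ⟨m₀, hm₀M⟩ := rfl
        rw [this, u.mul_inv]
        rfl
      have hELL : z • (w : ELL) - C (w : ELL) = m₀ := by
        have hcoe := congrArg (fun v : ↥M => (v : ELL)) happ
        simp only at hcoe
        rw [← hcoe]
        have : (algebraMap ℂ (↥M →L[ℂ] ↥M) z - T) w = z • w - T w := by
          rw [ContinuousLinearMap.sub_apply]
          congr 1
          try rw [Algebra.algebraMap_eq_smul_one]
          try rfl
        rw [this, Submodule.coe_sub, Submodule.coe_smul, hTcoe]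
      have heig : (∑' n, gseq z n * (z • (w:ELL) - C (w:ELL)) n) = 0 := by
        rw [lfun_sub hzd, lfun_smul hzd, lfun_cesaro' hzd C hC]
        ring
      rw [hELL] at heig
      exact heig
    have hFanalytic : AnalyticOnNhd ℂ (fun z => ∑' n, gseq z n * m₀ n) (Metric.ball (1:ℂ) 1) :=
      (lfun_differentiableOn m₀).analyticOnNhd Metric.isOpen_ball
    have hU : IsOpen (Metric.ball (1:ℂ) 1 ∩ (spectrum ℂ T)ᶜ) :=
      Metric.isOpen_ball.inter (spectrum.isClosed (𝕜 := ℂ) (A := ↥M →L[ℂ] ↥M) T).isOpen_compl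
    have hev : (fun z => ∑' n, gseq z n * m₀ n) =ᶠ[𝓝 z₀] 0 := by
      filter_upwards [hU.mem_nhds ⟨hz₀b, hz₀s⟩] with z hz
      exact hvanish z hz.1 hz.2
    have heqOn := hFanalytic.eqOn_zero_of_preconnected_of_eventuallyEq_zero
      (convex_ball (1:ℂ) 1).isPreconnected hz₀b hev
    have hzero := triangular m₀ (fun m => by
      have hmem : ((((m+1:ℕ)):ℂ))⁻¹ ∈ Metric.ball (1:ℂ) 1 := by
        rw [Metric.mem_ball, Complex.dist_eq]
        exact inv_nat_mem_ball m
      exact heqOn hmem)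
    exact hm₀ne (lp.ext (funext hzero))
  have hsup : {z : ℂ | Complex.abs (z - 1) ≤ 1} ⊆ spectrum ℂ T := by
    intro z hz
    have h1 : z ∈ Metric.closedBall (1:ℂ) 1 := by
      rw [Metric.mem_closedBall, Complex.dist_eq]
      exact hz
    rw [← closure_ball (1:ℂ) one_ne_zero] at h1
    exact (IsClosed.closure_subset_iff (spectrum.isClosed (𝕜 := ℂ) (A := ↥M →L[ℂ] ↥M) T)).mpr hball h1
  exact Set.Subset.antisymm hsub hsup
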